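/- Let α > 0 be a non-integer and set m = ⌊α⌋. Let (ψ_j)_{j≥1} be the Fourier basis on [0,1]. There exists a constant C > 0 depending only on α such that: for every real sequence (f_i)_{i≥1} with S := ∑_{i=1}^∞ i^α |f_i| < ∞, the series f(x) = ∑_{i=1}^∞ f_i ψ_i(x) defines a function that is m times continuously differentiable on [0,1] (the differentiated series converging uniformly), and its m-th derivative satisfies |f^{(m)}(x) − f^{(m)}(x')| ≤ C · S · |x − x'|^{α−m} for all x, x' ∈ [0,1]. -/

import Mathlib

open Real

/-- The Fourier basis on `[0,1]`: `ψ₁ = 1`, `ψ_{2i}(x) = √2 cos(2πix)`,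
`ψ_{2i+1}(x) = √2 sin(2πix)` for `i ≥ 1` (viewed as functions on `ℝ`). -/
noncomputable def fourierPsi (j : ℕ) (x : ℝ) : ℝ :=
  if j = 1 then 1
  else if j % 2 = 0 then Real.sqrt 2 * Real.cos (2 * Real.pi * (j / 2 : ℕ) * x)
  else Real.sqrt 2 * Real.sin (2 * Real.pi * (j / 2 : ℕ) * x)

namespace HolderAux

noncomputable def cA (i : ℕ) : ℝ := if i = 0 then 1 else Real.sqrt 2
noncomputable def cC (i : ℕ) : ℝ := 2 * Real.pi * (((i + 1) / 2 : ℕ) : ℝ)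
noncomputable def cP (i : ℕ) : ℝ :=
  if i = 0 then 0 else if (i + 1) % 2 = 0 then 0 else -(Real.pi / 2)

lemma psi_eq (i : ℕ) (x : ℝ) :
    fourierPsi (i + 1) x = cA i * Real.cos (cC i * x + cP i) := by
  rcases Nat.eq_zero_or_pos i with h | h
  · subst h; simp [fourierPsi, cA, cC, cP]
  · have h1 : i + 1 ≠ 1 := by omega
    have hi0 : i ≠ 0 := by omega
    rcases Nat.even_or_odd (i + 1) with he | ho
    · have h2 : (i + 1) % 2 = 0 := Nat.even_iff.mp he
      simp only [fourierPsi, if_neg h1, if_pos h2, cA, cC, cP, if_neg hi0, if_pos h2, add_zero]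
    · have h2 : ¬ (i + 1) % 2 = 0 := by
        rw [Nat.odd_iff.mp ho]; omega
      simp only [fourierPsi, if_neg h1, if_neg h2, cA, cC, cP, if_neg hi0]
      rw [← sub_eq_add_neg, Real.cos_sub_pi_div_two]

lemma sqrt2_ge_one : (1 : ℝ) ≤ Real.sqrt 2 := by
  rw [show (1:ℝ) = Real.sqrt 1 from (Real.sqrt_one).symm]
  exact Real.sqrt_le_sqrt (by norm_num)

lemma cA_nonneg (i : ℕ) : 0 ≤ cA i := by
  unfold cA; split <;> [norm_num; positivity]

lemma cA_le (i : ℕ) : cA i ≤ Real.sqrt 2 := by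
  unfold cA; split
  · exact sqrt2_ge_one
  · exact le_rfl
lemma cC_nonneg (i : ℕ) : 0 ≤ cC i := by
  unfold cC; positivity

lemma cC_le (i : ℕ) : cC i ≤ 2 * Real.pi * ((i : ℝ) + 1) := by
  unfold cC
  have h : (((i + 1) / 2 : ℕ) : ℝ) ≤ (i : ℝ) + 1 := by
    exact_mod_cast Nat.div_le_self (i + 1) 2
  have hp : (0:ℝ) ≤ 2 * Real.pi := by positivity
  nlinarith

lemma iteratedDeriv_amp_cos (a c φ : ℝ) (k : ℕ) :
    iteratedDeriv k (fun x => a * Real.cos (c * x + φ)) =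
      fun x => a * c ^ k * Real.cos (c * x + φ + k * (Real.pi / 2)) := by
  induction k with
  | zero => simp
  | succ k ih =>
    rw [iteratedDeriv_succ, ih]
    funext x
    have h3 : HasDerivAt (fun y : ℝ => c * y + (φ + k * (Real.pi / 2))) c x := by
      simpa using ((hasDerivAt_id x).const_mul c).add_const (φ + k * (Real.pi / 2))
    have h2 : HasDerivAt (fun y => a * c ^ k * Real.cos (c * y + φ + k * (Real.pi / 2)))
        (a * c ^ k * (-Real.sin (c * x + φ + k * (Real.pi / 2)) * c)) x := by
      have := ((Real.hasDerivAt_cos (c * x + (φ + k * (Real.pi / 2)))).comp x h3).const_mul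
        (a * c ^ k)
      simpa [Function.comp, add_assoc] using this
    rw [h2.deriv]
    have h4 : c * x + φ + (↑(k + 1) : ℝ) * (Real.pi / 2)
        = (c * x + φ + k * (Real.pi / 2)) + Real.pi / 2 := by push_cast; ring
    rw [h4, Real.cos_add_pi_div_two]
    ring

lemma itdWithin_eq {n : ℕ} {f : ℝ → ℝ} (hf : ContDiff ℝ (n : ℕ∞) f) {s : Set ℝ}
    (hs : UniqueDiffOn ℝ s) {x : ℝ} (hx : x ∈ s) :
    iteratedDerivWithin n f s x = iteratedDeriv n f x := by
  rw [iteratedDerivWithin_eq_iteratedFDerivWithin, iteratedDeriv_eq_iteratedFDeriv]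
  congr 1
  exact (((contDiff_iff_ftaylorSeries.mp hf).hasFTaylorSeriesUpToOn
    s).eq_iteratedFDerivWithin_of_uniqueDiffOn le_rfl hs hx).symm

lemma min_two_le (s t : ℝ) (hs0 : 0 < s) (hs1 : s ≤ 1) (ht : 0 ≤ t) :
    min 2 t ≤ 2 * t ^ s := by
  rcases eq_or_lt_of_le ht with h | h
  · simp [← h, Real.zero_rpow hs0.ne']
  rcases le_total t 2 with h2 | h2
  · have e : t = t ^ s * t ^ (1 - s) := by
      rw [← Real.rpow_add h, add_sub_cancel, Real.rpow_one]
    have b1 : t ^ (1 - s) ≤ 2 ^ (1 - s) := Real.rpow_le_rpow ht h2 (by linarith)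
    have b2 : (2:ℝ) ^ (1 - s) ≤ 2 := by
      calc (2:ℝ) ^ (1 - s) ≤ 2 ^ (1:ℝ) :=
            Real.rpow_le_rpow_of_exponent_le one_le_two (by linarith)
        _ = 2 := Real.rpow_one 2
    have hts : 0 ≤ t ^ s := Real.rpow_nonneg ht s
    calc min 2 t ≤ t := min_le_right _ _
      _ = t ^ s * t ^ (1 - s) := e
      _ ≤ t ^ s * 2 := by nlinarith [Real.rpow_nonneg ht (1 - s)]
      _ = 2 * t ^ s := by ring
  · have b1 : (2:ℝ) ^ s ≤ t ^ s := Real.rpow_le_rpow (by norm_num) h2 hs0.le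
    have b3 : (1:ℝ) ≤ 2 ^ s := by
      calc (1:ℝ) = 2 ^ (0:ℝ) := (Real.rpow_zero 2).symm
        _ ≤ 2 ^ s := Real.rpow_le_rpow_of_exponent_le one_le_two hs0.le
    calc min 2 t ≤ 2 := min_le_left _ _
      _ ≤ 2 * 2 ^ s := by nlinarith
      _ ≤ 2 * t ^ s := by nlinarith

lemma abs_sin_le_abs' (u : ℝ) : |Real.sin u| ≤ |u| := by
  rcases eq_or_ne u 0 with h | h
  · simp [h]
  · exact (Real.abs_sin_lt_abs h).le

lemma abs_cos_sub_cos (a b : ℝ) : |Real.cos a - Real.cos b| ≤ min 2 |a - b| := by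
  refine le_min ?_ ?_
  · have h1 := Real.neg_one_le_cos a
    have h2 := Real.cos_le_one a
    have h3 := Real.neg_one_le_cos b
    have h4 := Real.cos_le_one b
    rw [abs_le]; constructor <;> linarith
  · rw [Real.cos_sub_cos, abs_mul, abs_mul]
    have h1 : |Real.sin ((a + b) / 2)| ≤ 1 := Real.abs_sin_le_one _
    have h2 : |Real.sin ((a - b) / 2)| ≤ |(a - b) / 2| := abs_sin_le_abs' _
    have h3 : |(-2 : ℝ)| = 2 := by norm_num
    rw [h3]
    calc 2 * |Real.sin ((a + b) / 2)| * |Real.sin ((a - b) / 2)|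
        ≤ 2 * 1 * |(a - b) / 2| := by
          apply mul_le_mul _ h2 (abs_nonneg _) (by norm_num)
          nlinarith [abs_nonneg (Real.sin ((a + b) / 2))]
      _ = |a - b| := by
          rw [abs_div, abs_of_pos (by norm_num : (0:ℝ) < 2)]; ring

end HolderAux

open HolderAux

/-- Let `α > 0` be a non-integer and `m = ⌊α⌋`. There is `C > 0` depending
only on `α` such that every `f = ∑ f_i ψ_i` with `S = ∑ i^α |f_i| < ∞` is `m` times
continuously differentiable on `[0,1]` and its `m`-th derivative is Hölder continuous
of order `α − m` with constant `C·S`. -/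
theorem holder_class_smoothness (α : ℝ) (hα : 0 < α) (hαnonint : ∀ n : ℕ, α ≠ (n : ℝ)) :
    ∃ C : ℝ, 0 < C ∧ ∀ f : ℕ → ℝ,
      Summable (fun i : ℕ => ((i : ℝ) + 1) ^ α * |f i|) →
      ContDiffOn ℝ (⌊α⌋₊ : ℕ) (fun x : ℝ => ∑' i : ℕ, f i * fourierPsi (i + 1) x)
        (Set.Icc (0 : ℝ) 1) ∧
      ∀ x ∈ Set.Icc (0 : ℝ) 1, ∀ x' ∈ Set.Icc (0 : ℝ) 1,
        |iteratedDerivWithin ⌊α⌋₊ (fun x : ℝ => ∑' i : ℕ, f i * fourierPsi (i + 1) x)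
            (Set.Icc (0 : ℝ) 1) x -
          iteratedDerivWithin ⌊α⌋₊ (fun x : ℝ => ∑' i : ℕ, f i * fourierPsi (i + 1) x)
            (Set.Icc (0 : ℝ) 1) x'| ≤
          C * (∑' i : ℕ, ((i : ℝ) + 1) ^ α * |f i|) * |x - x'| ^ (α - ⌊α⌋₊) := by
  have hmlt : ((⌊α⌋₊ : ℕ) : ℝ) < α :=
    (Nat.floor_le hα.le).lt_of_ne (fun h => hαnonint ⌊α⌋₊ h.symm)
  have hlt1 : α < (⌊α⌋₊ : ℝ) + 1 := Nat.lt_floor_add_one α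
  have hs0 : 0 < α - (⌊α⌋₊ : ℝ) := by linarith
  have hs1 : α - (⌊α⌋₊ : ℝ) ≤ 1 := by linarith
  refine ⟨2 * Real.sqrt 2 * (2 * Real.pi) ^ α, by positivity, fun f hS => ?_⟩
  set m : ℕ := ⌊α⌋₊ with hmdef
  set C : ℝ := 2 * Real.sqrt 2 * (2 * Real.pi) ^ α with hCdef
  -- the series in amplitude-phase form
  set g : ℕ → ℝ → ℝ := fun i x => (f i * cA i) * Real.cos (cC i * x + cP i) with hgdef
  have hg_eq : (fun x : ℝ => ∑' i : ℕ, f i * fourierPsi (i + 1) x)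
      = fun x => ∑' i, g i x := by
    funext x
    exact tsum_congr fun i => by rw [psi_eq]; ring
  set v : ℕ → ℕ → ℝ :=
    fun k i => Real.sqrt 2 * (2 * Real.pi) ^ k * (((i : ℝ) + 1) ^ α * |f i|) with hvdef
  have hv : ∀ k : ℕ, (k : ℕ∞) ≤ (m : ℕ∞) → Summable (v k) := fun k _ => hS.mul_left _
  have habs : ∀ k : ℕ, k ≤ m → ∀ i : ℕ, ∀ y : ℝ,
      |(f i * cA i) * cC i ^ k * Real.cos y| ≤ v k i := by
    intro k hk i y
    have e1 : |f i * cA i| ≤ Real.sqrt 2 * |f i| := by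
      rw [abs_mul, abs_of_nonneg (cA_nonneg i)]
      nlinarith [abs_nonneg (f i), cA_le i]
    have e3 : cC i ^ k ≤ (2 * Real.pi) ^ k * ((i : ℝ) + 1) ^ α := by
      calc cC i ^ k ≤ (2 * Real.pi * ((i : ℝ) + 1)) ^ k :=
            pow_le_pow_left₀ (cC_nonneg i) (cC_le i) k
        _ = (2 * Real.pi) ^ k * ((i : ℝ) + 1) ^ (k : ℕ) := mul_pow _ _ _
        _ ≤ (2 * Real.pi) ^ k * ((i : ℝ) + 1) ^ α := by
            have h5 : ((i : ℝ) + 1) ^ (k : ℕ) = ((i : ℝ) + 1) ^ ((k : ℕ) : ℝ) :=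
              (Real.rpow_natCast _ k).symm
            rw [h5]
            have h6 : ((k : ℕ) : ℝ) ≤ α := by
              have : ((k : ℕ) : ℝ) ≤ ((m : ℕ) : ℝ) := by exact_mod_cast hk
              linarith
            have h7 : (1 : ℝ) ≤ (i : ℝ) + 1 := by
              have := Nat.cast_nonneg (α := ℝ) i; linarith
            have := Real.rpow_le_rpow_of_exponent_le h7 h6
            have hp : (0:ℝ) ≤ (2 * Real.pi) ^ k := by positivity
            nlinarith
    calc |(f i * cA i) * cC i ^ k * Real.cos y|
        = |f i * cA i| * |cC i ^ k| * |Real.cos y| := by rw [abs_mul, abs_mul]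
      _ ≤ (Real.sqrt 2 * |f i|) * ((2 * Real.pi) ^ k * ((i : ℝ) + 1) ^ α) * 1 := by
          apply mul_le_mul _ (Real.abs_cos_le_one _) (abs_nonneg _) (by positivity)
          apply mul_le_mul e1 _ (abs_nonneg _) (by positivity)
          rw [abs_of_nonneg (pow_nonneg (cC_nonneg i) k)]
          exact e3
      _ = v k i := by rw [hvdef]; ring
  have hgC : ∀ i : ℕ, ContDiff ℝ ((m : ℕ) : ℕ∞) (g i) := by
    intro i
    have h1 : ContDiff ℝ ((m : ℕ) : ℕ∞) (fun x : ℝ => cC i * x + cP i) :=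
      (contDiff_const.mul contDiff_id).add contDiff_const
    exact contDiff_const.mul (Real.contDiff_cos.comp h1)
  have h'f : ∀ (k : ℕ) (i : ℕ) (y : ℝ), (k : ℕ∞) ≤ (m : ℕ∞) →
      ‖iteratedFDeriv ℝ k (g i) y‖ ≤ v k i := by
    intro k i y hk
    have hk' : k ≤ m := by exact_mod_cast hk
    rw [norm_iteratedFDeriv_eq_norm_iteratedDeriv]
    have : iteratedDeriv k (g i)
        = fun x => (f i * cA i) * cC i ^ k * Real.cos (cC i * x + cP i + k * (Real.pi / 2)) :=
      iteratedDeriv_amp_cos _ _ _ k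
    rw [this, Real.norm_eq_abs]
    exact habs k hk' i _
  have hF : ContDiff ℝ ((m : ℕ) : ℕ∞) (fun x => ∑' i, g i x) := contDiff_tsum hgC hv h'f
  constructor
  · rw [hg_eq]
    exact hF.contDiffOn
  · intro x hx x' hx'
    have hU : UniqueDiffOn ℝ (Set.Icc (0:ℝ) 1) := uniqueDiffOn_Icc (by norm_num)
    rw [hg_eq, itdWithin_eq hF hU hx, itdWithin_eq hF hU hx']
    set D : ℕ → ℝ → ℝ :=
      fun i y => (f i * cA i) * cC i ^ m * Real.cos (cC i * y + cP i + m * (Real.pi / 2))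
      with hDdef
    have hDabs : ∀ y : ℝ, ∀ i : ℕ, |D i y| ≤ v m i := fun y i => habs m le_rfl i _
    have hsumD : ∀ y : ℝ, Summable (fun i => D i y) := by
      intro y
      exact Summable.of_norm_bounded (hv m le_rfl)
        (fun i => by rw [Real.norm_eq_abs]; exact hDabs y i)
    have hDeq : ∀ y : ℝ, iteratedDeriv m (fun x => ∑' i, g i x) y = ∑' i, D i y := by
      intro y
      have h1 := iteratedFDeriv_tsum hgC hv h'f (le_refl ((m : ℕ) : ℕ∞))
      have hsumF : Summable (fun n => iteratedFDeriv ℝ m (g n) y) :=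
        Summable.of_norm_bounded (hv m le_rfl) (fun n => h'f m n y le_rfl)
      rw [iteratedDeriv_eq_iteratedFDeriv, congrFun h1 y]
      calc (∑' n, iteratedFDeriv ℝ m (g n) y) (fun _ => (1:ℝ))
          = ∑' n, (iteratedFDeriv ℝ m (g n) y) (fun _ => (1:ℝ)) :=
            (ContinuousMultilinearMap.apply ℝ (fun _ : Fin m => ℝ) ℝ
              (fun _ => (1:ℝ))).map_tsum hsumF
        _ = ∑' n, D n y := by
            refine tsum_congr fun n => ?_
            rw [← iteratedDeriv_eq_iteratedFDeriv]
            have : iteratedDeriv m (g n) = fun x => (f n * cA n) * cC n ^ m *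
                Real.cos (cC n * x + cP n + m * (Real.pi / 2)) :=
              iteratedDeriv_amp_cos _ _ _ m
            rw [this]
    rw [hDeq x, hDeq x']
    have hterm : ∀ i : ℕ, |D i x - D i x'|
        ≤ (C * |x - x'| ^ (α - (m : ℝ))) * (((i : ℝ) + 1) ^ α * |f i|) := by
      intro i
      have key : |Real.cos (cC i * x + cP i + m * (Real.pi / 2))
          - Real.cos (cC i * x' + cP i + m * (Real.pi / 2))|
          ≤ 2 * (cC i * |x - x'|) ^ (α - (m : ℝ)) := by
        refine le_trans (abs_cos_sub_cos _ _) ?_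
        have hd : (cC i * x + cP i + m * (Real.pi / 2))
            - (cC i * x' + cP i + m * (Real.pi / 2)) = cC i * (x - x') := by ring
        rw [hd, abs_mul, abs_of_nonneg (cC_nonneg i)]
        exact min_two_le _ _ hs0 hs1 (mul_nonneg (cC_nonneg i) (abs_nonneg _))
      have e1 : |f i * cA i| ≤ Real.sqrt 2 * |f i| := by
        rw [abs_mul, abs_of_nonneg (cA_nonneg i)]
        nlinarith [abs_nonneg (f i), cA_le i]
      have hrw : (cC i * |x - x'|) ^ (α - (m : ℝ))
          = cC i ^ (α - (m : ℝ)) * |x - x'| ^ (α - (m : ℝ)) :=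
        Real.mul_rpow (cC_nonneg i) (abs_nonneg _)
      have hpow : cC i ^ (m : ℕ) * cC i ^ (α - (m : ℝ)) = cC i ^ α := by
        rw [← Real.rpow_natCast (cC i) m, ← Real.rpow_add' (cC_nonneg i) (by
          push_cast; linarith [hα] )]
        norm_num
      have hCa : cC i ^ α ≤ (2 * Real.pi) ^ α * ((i : ℝ) + 1) ^ α := by
        calc cC i ^ α ≤ (2 * Real.pi * ((i : ℝ) + 1)) ^ α :=
              Real.rpow_le_rpow (cC_nonneg i) (cC_le i) hα.le
          _ = (2 * Real.pi) ^ α * ((i : ℝ) + 1) ^ α :=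
              Real.mul_rpow (by positivity) (by positivity)
      have hnn1 : (0:ℝ) ≤ |x - x'| ^ (α - (m : ℝ)) := Real.rpow_nonneg (abs_nonneg _) _
      have hnn2 : (0:ℝ) ≤ cC i ^ (α - (m : ℝ)) := Real.rpow_nonneg (cC_nonneg i) _
      have hnn3 : (0:ℝ) ≤ cC i ^ (m : ℕ) := pow_nonneg (cC_nonneg i) _
      calc |D i x - D i x'|
          = |f i * cA i| * |cC i ^ (m:ℕ)| *
            |Real.cos (cC i * x + cP i + m * (Real.pi / 2))
              - Real.cos (cC i * x' + cP i + m * (Real.pi / 2))| := by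
            rw [hDdef]
            rw [show (f i * cA i) * cC i ^ m * Real.cos (cC i * x + cP i + m * (Real.pi / 2))
                - (f i * cA i) * cC i ^ m * Real.cos (cC i * x' + cP i + m * (Real.pi / 2))
                = (f i * cA i) * cC i ^ m *
                  (Real.cos (cC i * x + cP i + m * (Real.pi / 2))
                    - Real.cos (cC i * x' + cP i + m * (Real.pi / 2))) from by ring]
            rw [abs_mul, abs_mul]
        _ ≤ (Real.sqrt 2 * |f i|) * cC i ^ (m:ℕ) *
            (2 * (cC i * |x - x'|) ^ (α - (m : ℝ))) := by
            apply mul_le_mul _ key (abs_nonneg _) (by positivity)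
            rw [abs_of_nonneg hnn3]
            exact mul_le_mul_of_nonneg_right e1 hnn3
        _ = 2 * Real.sqrt 2 * |f i| * (cC i ^ (m:ℕ) * cC i ^ (α - (m : ℝ)))
              * |x - x'| ^ (α - (m : ℝ)) := by
            rw [hrw]; ring
        _ = 2 * Real.sqrt 2 * |f i| * cC i ^ α * |x - x'| ^ (α - (m : ℝ)) := by rw [hpow]
        _ ≤ 2 * Real.sqrt 2 * |f i| * ((2 * Real.pi) ^ α * ((i : ℝ) + 1) ^ α)
              * |x - x'| ^ (α - (m : ℝ)) := by
            have h8 : (0:ℝ) ≤ 2 * Real.sqrt 2 * |f i| := by positivity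
            nlinarith [mul_le_mul_of_nonneg_left hCa h8, hnn1,
              mul_le_mul_of_nonneg_right (mul_le_mul_of_nonneg_left hCa h8) hnn1]
        _ = (C * |x - x'| ^ (α - (m : ℝ))) * (((i : ℝ) + 1) ^ α * |f i|) := by
            rw [hCdef]; ring
    have hsub : Summable (fun i => D i x - D i x') := (hsumD x).sub (hsumD x')
    calc |∑' i, D i x - ∑' i, D i x'|
        = |∑' i, (D i x - D i x')| := by rw [Summable.tsum_sub (hsumD x) (hsumD x')]
      _ ≤ ∑' i, |D i x - D i x'| := by
          simpa [Real.norm_eq_abs] using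
            norm_tsum_le_tsum_norm (f := fun i => D i x - D i x')
              (by simpa [Real.norm_eq_abs] using hsub.abs)
      _ ≤ ∑' i : ℕ, (C * |x - x'| ^ (α - (m : ℝ))) * (((i : ℝ) + 1) ^ α * |f i|) :=
          Summable.tsum_le_tsum hterm hsub.abs (hS.mul_left _)
      _ = (C * |x - x'| ^ (α - (m : ℝ))) * ∑' i : ℕ, ((i : ℝ) + 1) ^ α * |f i| :=
          tsum_mul_left
      _ = C * (∑' i : ℕ, ((i : ℝ) + 1) ^ α * |f i|) * |x - x'| ^ (α - (m : ℝ)) := by ring
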